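/- For γ > 0 let D_γ be the symmetric 6×6 real matrix whose (m,n) entry equals s_γ = γ(5γ²+5γ+1)/(8(1+2γ)²(1+4γ)²(3+4γ)) if m = n, equals z_γ = γ³/(8(1+2γ)²(1+4γ)²(3+4γ)) if m + n = 7, and equals t_γ = −γ²/(16(1+2γ)(1+4γ)²(3+4γ)) otherwise. Then for every θ ∈ [0,1] and every γ > 0, the convex combination θ D_1 + (1−θ) D_γ is symmetric and positive definite; in particular det(θ D_1 + (1−θ) D_γ) > 0. -/

import Mathlib

noncomputable section

def sG (γ : ℝ) : ℝ :=
  γ * (5 * γ ^ 2 + 5 * γ + 1) / (8 * (1 + 2 * γ) ^ 2 * (1 + 4 * γ) ^ 2 * (3 + 4 * γ))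

def tG (γ : ℝ) : ℝ := -(γ ^ 2) / (16 * (1 + 2 * γ) * (1 + 4 * γ) ^ 2 * (3 + 4 * γ))

def zG (γ : ℝ) : ℝ := γ ^ 3 / (8 * (1 + 2 * γ) ^ 2 * (1 + 4 * γ) ^ 2 * (3 + 4 * γ))

def Dvol (γ : ℝ) : Matrix (Fin 6) (Fin 6) ℝ :=
  Matrix.of fun m n : Fin 6 =>
    if m = n then sG γ else if (m : ℕ) + (n : ℕ) = 5 then zG γ else tG γ

lemma Dvol_isSymm (γ : ℝ) : (Dvol γ).IsSymm := by
  ext m n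
  simp only [Dvol, Matrix.transpose_apply, Matrix.of_apply]
  by_cases h : m = n
  · simp [h]
  · have h' : n ≠ m := fun hh => h hh.symm
    simp only [h, h', if_false]
    have : (m : ℕ) + n = n + m := Nat.add_comm _ _
    rw [this]

lemma aux_eigs (γ : ℝ) (hγ : 0 < γ) :
    tG γ ≤ 0 ∧ 0 < sG γ + zG γ + 4 * tG γ ∧ 0 < sG γ - zG γ := by
  have h1 : (0:ℝ) < 1 + 2 * γ := by linarith
  have h2 : (0:ℝ) < 1 + 4 * γ := by linarith
  have h3 : (0:ℝ) < 3 + 4 * γ := by linarith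
  have hD : (0:ℝ) < 8 * (1 + 2 * γ) ^ 2 * (1 + 4 * γ) ^ 2 * (3 + 4 * γ) := by
    have := pow_pos h1 2; have := pow_pos h2 2; positivity
  have hD2 : (0:ℝ) < 16 * (1 + 2 * γ) * (1 + 4 * γ) ^ 2 * (3 + 4 * γ) := by
    have := pow_pos h2 2; positivity
  refine ⟨?_, ?_, ?_⟩
  · rw [tG]
    apply div_nonpos_of_nonpos_of_nonneg
    · nlinarith [sq_nonneg γ]
    · exact hD2.le
  · have he : sG γ + zG γ + 4 * tG γ
        = γ * (2 * γ + 1) * (γ + 1) / (8 * (1 + 2 * γ) ^ 2 * (1 + 4 * γ) ^ 2 * (3 + 4 * γ)) := by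
      rw [sG, zG, tG]
      field_simp
      ring
    rw [he]
    apply div_pos _ hD
    nlinarith
  · have he : sG γ - zG γ
        = γ * (4 * γ + 1) * (γ + 1) / (8 * (1 + 2 * γ) ^ 2 * (1 + 4 * γ) ^ 2 * (3 + 4 * γ)) := by
      rw [sG, zG]
      field_simp
      ring
    rw [he]
    apply div_pos _ hD
    nlinarith

lemma Dvol_posDef (γ : ℝ) (hγ : 0 < γ) : (Dvol γ).PosDef := by
  obtain ⟨hT, hL1, hL3⟩ := aux_eigs γ hγ
  refine Matrix.posDef_iff_dotProduct_mulVec.mpr ⟨Dvol_isSymm γ, fun x hx => ?_⟩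
  have hxx : 0 < x 0 ^ 2 + x 1 ^ 2 + x 2 ^ 2 + x 3 ^ 2 + x 4 ^ 2 + x 5 ^ 2 := by
    rcases Function.ne_iff.mp hx with ⟨i, hi⟩
    have hi0 : x i ≠ 0 := hi
    have hi' : 0 < x i ^ 2 := by positivity
    have hsum : 0 < ∑ j, x j ^ 2 :=
      lt_of_lt_of_le hi' (Finset.single_le_sum (fun j _ => sq_nonneg (x j)) (Finset.mem_univ i))
    rwa [Fin.sum_univ_six] at hsum
  have hQ : dotProduct (star x) ((Dvol γ).mulVec x)
      = sG γ * (x 0 ^ 2 + x 1 ^ 2 + x 2 ^ 2 + x 3 ^ 2 + x 4 ^ 2 + x 5 ^ 2)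
        + 2 * zG γ * (x 0 * x 5 + x 1 * x 4 + x 2 * x 3)
        + 2 * tG γ * (x 0 * x 1 + x 0 * x 2 + x 0 * x 3 + x 0 * x 4
            + x 1 * x 2 + x 1 * x 3 + x 1 * x 5 + x 2 * x 4 + x 2 * x 5
            + x 3 * x 4 + x 3 * x 5 + x 4 * x 5) := by
    simp only [Dvol, Matrix.mulVec, dotProduct, Fin.sum_univ_six, Matrix.of_apply,
      Pi.star_apply, star_trivial, Fin.ext_iff,
      show ((0:Fin 6):ℕ) = 0 from rfl, show ((1:Fin 6):ℕ) = 1 from rfl,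
      show ((2:Fin 6):ℕ) = 2 from rfl, show ((3:Fin 6):ℕ) = 3 from rfl,
      show ((4:Fin 6):ℕ) = 4 from rfl, show ((5:Fin 6):ℕ) = 5 from rfl]
    norm_num
    ring
  rw [hQ]
  set a := x 0 + x 5 with ha
  set b := x 1 + x 4 with hb
  set c := x 2 + x 3 with hc
  set p := x 0 - x 5 with hp
  set q := x 1 - x 4 with hq
  set r := x 2 - x 3 with hr
  clear_value a b c p q r
  have key : sG γ * (x 0 ^ 2 + x 1 ^ 2 + x 2 ^ 2 + x 3 ^ 2 + x 4 ^ 2 + x 5 ^ 2)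
        + 2 * zG γ * (x 0 * x 5 + x 1 * x 4 + x 2 * x 3)
        + 2 * tG γ * (x 0 * x 1 + x 0 * x 2 + x 0 * x 3 + x 0 * x 4
            + x 1 * x 2 + x 1 * x 3 + x 1 * x 5 + x 2 * x 4 + x 2 * x 5
            + x 3 * x 4 + x 3 * x 5 + x 4 * x 5)
      = ((sG γ + zG γ + 4 * tG γ) * (a ^ 2 + b ^ 2 + c ^ 2)
        + (sG γ - zG γ) * (p ^ 2 + q ^ 2 + r ^ 2)
        + (-(2 * tG γ)) * ((a - b) ^ 2 + (b - c) ^ 2 + (a - c) ^ 2)) / 2 := by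
    rw [ha, hb, hc, hp, hq, hr]; ring
  rw [key]
  have habc : a ^ 2 + b ^ 2 + c ^ 2 + (p ^ 2 + q ^ 2 + r ^ 2)
      = 2 * (x 0 ^ 2 + x 1 ^ 2 + x 2 ^ 2 + x 3 ^ 2 + x 4 ^ 2 + x 5 ^ 2) := by
    rw [ha, hb, hc, hp, hq, hr]; ring
  have h1 : 0 ≤ (-(2 * tG γ)) * ((a - b) ^ 2 + (b - c) ^ 2 + (a - c) ^ 2) := by
    apply mul_nonneg (by linarith)
    positivity
  have h2 : 0 < (sG γ + zG γ + 4 * tG γ) * (a ^ 2 + b ^ 2 + c ^ 2)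
      + (sG γ - zG γ) * (p ^ 2 + q ^ 2 + r ^ 2) := by
    rcases lt_or_ge 0 (a ^ 2 + b ^ 2 + c ^ 2) with h | h
    · have h1' : 0 < (sG γ + zG γ + 4 * tG γ) * (a ^ 2 + b ^ 2 + c ^ 2) := mul_pos hL1 h
      have h2' : 0 ≤ (sG γ - zG γ) * (p ^ 2 + q ^ 2 + r ^ 2) :=
        mul_nonneg hL3.le (by positivity)
      linarith
    · have habc0 : a ^ 2 + b ^ 2 + c ^ 2 = 0 := le_antisymm h (by positivity)
      have hpq : 0 < p ^ 2 + q ^ 2 + r ^ 2 := by linarith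
      have h2' : 0 < (sG γ - zG γ) * (p ^ 2 + q ^ 2 + r ^ 2) := mul_pos hL3 hpq
      rw [habc0, mul_zero, zero_add]
      exact h2'
  linarith

set_option maxRecDepth 8000 in
lemma detpos' {n : Type*} [Fintype n] [DecidableEq n] {M : Matrix n n ℝ} (h : M.PosDef) :
    0 < M.det := h.det_pos

/-- Any convex blend `θ D₁ + (1−θ) D_γ` of the uniform and Dirichlet volumetric moment
matrices is symmetric positive definite; in particular its determinant is positive. -/
theorem Dvol_convex_blend_posDef (θ γ : ℝ) (hθ : θ ∈ Set.Icc (0 : ℝ) 1) (hγ : 0 < γ) :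
    (θ • Dvol 1 + (1 - θ) • Dvol γ).IsSymm ∧
      (θ • Dvol 1 + (1 - θ) • Dvol γ).PosDef ∧
      0 < (θ • Dvol 1 + (1 - θ) • Dvol γ).det := by
  obtain ⟨hθ0, hθ1⟩ := hθ
  have hpd : (θ • Dvol 1 + (1 - θ) • Dvol γ).PosDef := by
    rcases eq_or_lt_of_le hθ0 with h0 | h0
    · have : θ • Dvol 1 + (1 - θ) • Dvol γ = Dvol γ := by
        rw [← h0, zero_smul, sub_zero, one_smul, zero_add]
      rw [this]; exact Dvol_posDef γ hγ
    · have hA : (θ • Dvol 1).PosDef := by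
        refine Matrix.posDef_iff_dotProduct_mulVec.mpr ⟨?_, fun x hx => ?_⟩
        · exact (Dvol_isSymm 1).smul θ
        · rw [Matrix.smul_mulVec, dotProduct_smul, smul_eq_mul]
          exact mul_pos h0 ((Dvol_posDef 1 one_pos).dotProduct_mulVec_pos hx)
      have hB : ((1 - θ) • Dvol γ).PosSemidef := by
        refine Matrix.posSemidef_iff_dotProduct_mulVec.mpr ⟨?_, fun x => ?_⟩
        · exact (Dvol_isSymm γ).smul (1 - θ)
        · rw [Matrix.smul_mulVec, dotProduct_smul, smul_eq_mul]
          exact mul_nonneg (by linarith) ((Dvol_posDef γ hγ).posSemidef.dotProduct_mulVec_nonneg x)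
      exact hA.add_posSemidef hB
  refine ⟨?_, hpd, detpos' hpd⟩
  rw [Matrix.IsSymm, ← Matrix.conjTranspose_eq_transpose_of_trivial]
  exact hpd.isHermitian

end
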